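/- Let $f(x)$ be a polynomial of degree $2g+2$ with $g \ge 1$ and let $(x_i, y_i)$, $i = 1, \dots, g+2$, be points on $y^2 = f(x)$ with pairwise distinct abscissas, and $V$ the Lagrange interpolation polynomial of degree $\le g+1$ through them. If the leading coefficient of $f - V^2$ (in degree $2g+2$) is nonzero, then $U' = (f - V^2)/\prod_{i=1}^{g+2}(x - x_i)$ is a polynomial of degree exactly $g$, and every root $x_0$ of $U'$ gives a point $(x_0, -V(x_0))$ on the curve. In particular, the intersection divisor of the curve $y = V(x)$ with $y^2 = f(x)$ is $\sum_{i=1}^{g+2} P_i + D'$ with $\deg D' = g$. -/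
import Mathlib


open Polynomial

/-- Generic single reduction step of Proposition 1: for `g + 2` points on `y² = f(x)`
(`deg f = 2g + 2`) with Lagrange interpolation polynomial `V` of degree ≤ g + 1, if the
top coefficient of `f - V²` is nonzero, then `U' = (f - V²)/∏(x - xᵢ)` has degree
exactly `g`, and every root `x₀` of `U'` gives a point `(x₀, -V(x₀))` on the curve. -/
theorem stmt18 {k : Type*} [Field k] [CharZero k] (g : ℕ) (hg : 1 ≤ g)
    (f V : Polynomial k) (hfdeg : f.natDegree = 2 * g + 2)
    (x y : Fin (g + 2) → k) (hx : Function.Injective x)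
    (hVdeg : V.natDegree ≤ g + 1)
    (hy : ∀ i, (y i) ^ 2 = f.eval (x i))
    (hV : ∀ i, V.eval (x i) = y i)
    (htop : (f - V ^ 2).coeff (2 * g + 2) ≠ 0) :
    ((f - V ^ 2) / ∏ i, (X - C (x i))).natDegree = g ∧
    ∀ x0 : k, ((f - V ^ 2) / ∏ i, (X - C (x i))).eval x0 = 0 →
      (-(V.eval x0)) ^ 2 = f.eval x0 := by
  set P : Polynomial k := f - V ^ 2 with hP
  set q : Polynomial k := ∏ i, (X - C (x i)) with hq
  have hPne : P ≠ 0 := fun h => htop (by simp [h])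
  have hPdeg : P.natDegree = 2 * g + 2 := by
    have hle : P.natDegree ≤ 2 * g + 2 := by
      refine (natDegree_sub_le _ _).trans (max_le (le_of_eq hfdeg) ?_)
      calc (V ^ 2).natDegree ≤ 2 * V.natDegree := natDegree_pow_le_of_le 2 le_rfl
        _ ≤ 2 * (g + 1) := by omega
        _ = 2 * g + 2 := by ring
    exact le_antisymm hle (le_natDegree_of_ne_zero htop)
  have hqmonic : q.Monic := monic_prod_of_monic _ _ fun i _ => monic_X_sub_C _
  have hqdeg : q.natDegree = g + 2 := by
    rw [hq, natDegree_prod _ _ fun i _ => X_sub_C_ne_zero _]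
    simp
  have hdvd : q ∣ P := by
    refine Finset.prod_dvd_of_coprime ?_ fun i _ => ?_
    · exact (pairwise_coprime_X_sub_C hx).set_pairwise _
    · rw [dvd_iff_isRoot, IsRoot, hP]
      simp [hV i, hy i]
  obtain ⟨U, hU⟩ := hdvd
  have hqne : q ≠ 0 := hqmonic.ne_zero
  have hUeq : P / q = U := by
    rw [hU]; exact mul_div_cancel_left₀ U hqne
  have hUne : U ≠ 0 := fun h => hPne (by rw [hU, h, mul_zero])
  constructor
  · rw [hUeq]
    have : P.natDegree = q.natDegree + U.natDegree := by
      rw [hU, natDegree_mul hqne hUne]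
    omega
  · intro x0 h0
    rw [hUeq] at h0
    have : P.eval x0 = 0 := by rw [hU]; simp [h0]
    have : f.eval x0 - (V.eval x0) ^ 2 = 0 := by
      simpa [hP] using this
    calc (-(eval x0 V)) ^ 2 = (eval x0 V) ^ 2 := by ring
      _ = eval x0 f := by linear_combination -this
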